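/- For every α ∈ (0,1) and s > 0, Γ(1 + s/α)/Γ(1+s) = exp( γ(1 - 1/α) s + ∫_{-∞}^0 (e^{sx} - 1 - sx) · e^{-α|x|}(1 - e^{-(1-α)|x|}) / (|x|(1 - e^{-|x|})(1 - e^{-α|x|})) dx ), where γ is Euler's constant. -/

import Mathlib

open Real Set MeasureTheory Filter Finset Topology ENNReal NNReal intervalIntegral

lemma gammaSeriesHasSum (t : ℝ) (ht : 0 < t) :
    HasSum (fun n : ℕ => t / (n + 1) - Real.log (1 + t / (n + 1)))
      (Real.log (Real.Gamma (1 + t)) + Real.eulerMascheroniConstant * t) := by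
  have hnonneg : ∀ n : ℕ, 0 ≤ t / (n + 1) - Real.log (1 + t / (n + 1)) := by
    intro n
    have h1 : (0:ℝ) < 1 + t / (n + 1) := by positivity
    have := Real.log_le_sub_one_of_pos h1
    linarith
  rw [hasSum_iff_tendsto_nat_of_nonneg hnonneg]
  have key : ∀ N : ℕ, 1 ≤ N →
      ∑ n ∈ range N, (t / (n + 1) - Real.log (1 + t / (n + 1)))
        = t * ((harmonic N : ℝ) - Real.log N) + Real.log (t * Real.GammaSeq t N) := by
    intro N hN
    have hNpos : (0:ℝ) < N := by exact_mod_cast hN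
    have hP : (0:ℝ) < ∏ n ∈ range N, (t + n + 1) := prod_pos fun n _ => by positivity
    have hF : (0:ℝ) < (N.factorial : ℝ) := by exact_mod_cast N.factorial_pos
    have hfacR : (N.factorial : ℝ) = ∏ n ∈ range N, ((n:ℝ) + 1) := by
      rw [← Finset.prod_range_add_one_eq_factorial]
      push_cast; rfl
    have hd : ∏ j ∈ range (N+1), (t + (j:ℝ)) = t * ∏ n ∈ range N, (t + n + 1) := by
      have e1 : ∀ n ∈ range N, t + (((n+1 : ℕ)):ℝ) = t + n + 1 := fun n _ => by push_cast; ring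
      rw [Finset.prod_range_succ', Finset.prod_congr rfl e1]
      push_cast
      ring
    have h2 : ∏ n ∈ range N, (1 + t / ((n:ℝ) + 1))
        = (∏ n ∈ range N, (t + (n:ℝ) + 1)) / (N.factorial : ℝ) := by
      rw [hfacR, ← Finset.prod_div_distrib]
      refine Finset.prod_congr rfl fun n _ => ?_
      have : ((n:ℝ) + 1) ≠ 0 := by positivity
      field_simp; ring
    have hP2 : (0:ℝ) < ∏ n ∈ range N, (1 + t / ((n:ℝ) + 1)) :=
      prod_pos fun n _ => by positivity
    have hGpos : 0 < Real.GammaSeq t N := by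
      rw [Real.GammaSeq]
      have h1 : (0:ℝ) < (N:ℝ) ^ t := Real.rpow_pos_of_pos hNpos t
      have hdpos : (0:ℝ) < ∏ j ∈ range (N + 1), (t + j) := by rw [hd]; positivity
      positivity
    have hprod : (t * Real.GammaSeq t N) * ∏ n ∈ range N, (1 + t / ((n:ℝ) + 1)) = (N:ℝ) ^ t := by
      rw [Real.GammaSeq, hd, h2]
      field_simp
    have hlog : Real.log (t * Real.GammaSeq t N)
        + Real.log (∏ n ∈ range N, (1 + t / ((n:ℝ) + 1))) = t * Real.log N := by
      rw [← Real.log_mul (by positivity) (ne_of_gt hP2), hprod, Real.log_rpow hNpos]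
    have hsumlog : ∑ n ∈ range N, Real.log (1 + t / ((n:ℝ) + 1))
        = Real.log (∏ n ∈ range N, (1 + t / ((n:ℝ) + 1))) :=
      (Real.log_prod fun n _ => by positivity).symm
    have hharm : (harmonic N : ℝ) = ∑ n ∈ range N, ((n:ℝ) + 1)⁻¹ := by
      rw [harmonic]; push_cast; rfl
    rw [Finset.sum_sub_distrib, hsumlog, hharm]
    have hts : ∑ x ∈ range N, t / ((x:ℝ) + 1) = t * ∑ n ∈ range N, ((n:ℝ)+1)⁻¹ := by
      rw [Finset.mul_sum]; exact Finset.sum_congr rfl fun n _ => div_eq_mul_inv t _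
    rw [hts, mul_sub]
    linarith [hlog]
  have hlim : Tendsto (fun N : ℕ => t * ((harmonic N : ℝ) - Real.log N)
      + Real.log (t * Real.GammaSeq t N)) atTop
      (𝓝 (Real.log (Real.Gamma (1 + t)) + Real.eulerMascheroniConstant * t)) := by
    have h1 : Tendsto (fun N : ℕ => t * ((harmonic N : ℝ) - Real.log N)) atTop
        (𝓝 (t * Real.eulerMascheroniConstant)) :=
      (Real.tendsto_harmonic_sub_log).const_mul t
    have h2 : Tendsto (fun N : ℕ => t * Real.GammaSeq t N) atTop (𝓝 (t * Real.Gamma t)) :=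
      (Real.GammaSeq_tendsto_Gamma t).const_mul t
    have h3 : Tendsto (fun N : ℕ => Real.log (t * Real.GammaSeq t N)) atTop
        (𝓝 (Real.log (t * Real.Gamma t))) :=
      (Real.continuousAt_log (ne_of_gt (mul_pos ht (Real.Gamma_pos_of_pos ht)))).tendsto.comp h2
    have h4 : Real.log (t * Real.Gamma t) = Real.log (Real.Gamma (1 + t)) := by
      rw [add_comm, Real.Gamma_add_one (ne_of_gt ht)]
    rw [← h4]
    have := h1.add h3
    convert this using 2
    ring
  refine hlim.congr' ?_
  filter_upwards [eventually_ge_atTop 1] with N hN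
  exact (key N hN).symm

-- ∫_{Ioi 0} exp (-(b*u)) du = 1/b
lemma exp_int (b : ℝ) (hb : 0 < b) : ∫ u in Ioi (0:ℝ), Real.exp (-(b*u)) = 1/b := by
  have := integral_comp_mul_left_Ioi (fun x => Real.exp (-x)) 0 hb
  simp only [mul_zero] at this
  rw [this, integral_exp_neg_Ioi, neg_zero, Real.exp_zero, smul_eq_mul, mul_one, one_div]

lemma frullani_integrable (c t : ℝ) (hc : 0 < c) (ht : 0 < t) :
    IntegrableOn (fun u => (Real.exp (-(t*u)) - 1 + t*u) * Real.exp (-(c*u)) / u)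
      (Ioi (0:ℝ)) := by
  have hmeas : AEStronglyMeasurable
      (fun u => (Real.exp (-(t*u)) - 1 + t*u) * Real.exp (-(c*u)) / u)
      (volume.restrict (Ioi (0:ℝ))) := by
    apply Measurable.aestronglyMeasurable
    fun_prop
  have hdom : IntegrableOn (fun u => t * Real.exp (-c * u)) (Ioi (0:ℝ)) :=
    (exp_neg_integrableOn_Ioi 0 hc).const_mul t
  refine MeasureTheory.Integrable.mono hdom hmeas ?_
  rw [ae_restrict_iff' measurableSet_Ioi]
  filter_upwards with u hu
  have hu0 : 0 < u := hu
  have h1 : 0 ≤ Real.exp (-(t*u)) - 1 + t*u := by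
    have := Real.add_one_le_exp (-(t*u)); linarith
  have h2 : Real.exp (-(t*u)) - 1 + t*u ≤ t*u := by
    have : Real.exp (-(t*u)) ≤ 1 := Real.exp_le_one_iff.2 (by nlinarith)
    linarith
  have h3 : 0 < Real.exp (-(c*u)) := Real.exp_pos _
  rw [Real.norm_eq_abs, Real.norm_eq_abs]
  rw [abs_of_nonneg (by positivity), abs_of_nonneg (by positivity : (0:ℝ) ≤ t * Real.exp (-c*u))]
  rw [div_le_iff₀ hu0, neg_mul]
  calc (Real.exp (-(t*u)) - 1 + t*u) * Real.exp (-(c*u))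
      ≤ (t*u) * Real.exp (-(c*u)) := by nlinarith
    _ = t * Real.exp (-(c*u)) * u := by ring

lemma frullani (c t : ℝ) (hc : 0 < c) (ht : 0 < t) :
    ∫ u in Ioi (0:ℝ), (Real.exp (-(t*u)) - 1 + t*u) * Real.exp (-(c*u)) / u
      = t/c - Real.log (1 + t/c) := by
  -- inner representation
  have inner : ∀ u ∈ Ioi (0:ℝ),
      (Real.exp (-(t*u)) - 1 + t*u) * Real.exp (-(c*u)) / u
        = ∫ r in Ioc (0:ℝ) t, (Real.exp (-(c*u)) - Real.exp (-((c+r)*u))) := by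
    intro u hu
    have hu0 : 0 < u := hu
    rw [← intervalIntegral.integral_of_le ht.le]
    have h1 : ∫ r in (0:ℝ)..t, (Real.exp (-(c*u)) - Real.exp (-((c+r)*u)))
        = ∫ r in (0:ℝ)..t, (Real.exp (-(c*u)) - Real.exp (-(c*u)) * Real.exp (-(u*r))) := by
      congr 1; ext r; rw [← Real.exp_add]; ring_nf
    rw [h1]
    have hint : IntervalIntegrable (fun r => Real.exp (-(c*u)) * Real.exp (-(u*r)))
        volume 0 t := by
      apply Continuous.intervalIntegrable; fun_prop
    rw [intervalIntegral.integral_sub (intervalIntegrable_const) hint,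
      intervalIntegral.integral_const, intervalIntegral.integral_const_mul]
    have h2 : ∫ r in (0:ℝ)..t, Real.exp (-(u*r)) = (1 - Real.exp (-(u*t)))/u := by
      have h3 : ∀ r : ℝ, Real.exp (-(u*r)) = Real.exp ((-u) * r) := fun r => by ring_nf
      simp_rw [h3]
      rw [intervalIntegral.integral_comp_mul_left (fun x => Real.exp x) (by linarith : (-u) ≠ 0)]
      rw [integral_exp]
      simp only [mul_zero, Real.exp_zero, smul_eq_mul, neg_mul]
      rw [inv_neg, div_eq_inv_mul]
      ring
    rw [h2, mul_comm u t]
    field_simp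
    ring
  rw [setIntegral_congr_fun measurableSet_Ioi inner]
  -- swap
  have hswap : ∫ u in Ioi (0:ℝ), ∫ r in Ioc (0:ℝ) t,
        (Real.exp (-(c*u)) - Real.exp (-((c+r)*u)))
      = ∫ r in Ioc (0:ℝ) t, ∫ u in Ioi (0:ℝ),
        (Real.exp (-(c*u)) - Real.exp (-((c+r)*u))) := by
    apply MeasureTheory.integral_integral_swap
    -- integrable on product
    have hmeas : AEStronglyMeasurable
        (Function.uncurry fun u r => Real.exp (-(c*u)) - Real.exp (-((c+r)*u)))
        ((volume.restrict (Ioi (0:ℝ))).prod (volume.restrict (Ioc (0:ℝ) t))) := by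
      apply Continuous.aestronglyMeasurable
      fun_prop
    have hdom : Integrable (fun z : ℝ × ℝ => Real.exp (-c * z.1) * 1)
        ((volume.restrict (Ioi (0:ℝ))).prod (volume.restrict (Ioc (0:ℝ) t))) :=
      Integrable.mul_prod (exp_neg_integrableOn_Ioi 0 hc) (integrable_const 1)
    refine hdom.mono hmeas ?_
    rw [Measure.prod_restrict, ae_restrict_iff' (measurableSet_Ioi.prod measurableSet_Ioc)]
    filter_upwards with z hz
    obtain ⟨hz1, hz2⟩ := hz
    have hu0 : 0 < z.1 := hz1
    have hr0 : 0 < z.2 := hz2.1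
    simp only [Function.uncurry]
    rw [Real.norm_eq_abs, Real.norm_eq_abs, mul_one]
    have e1 : Real.exp (-((c+z.2)*z.1)) ≤ Real.exp (-(c*z.1)) := by
      apply Real.exp_le_exp.2; nlinarith
    rw [abs_of_nonneg (by linarith [Real.exp_pos (-((c+z.2)*z.1))] : 
      (0:ℝ) ≤ Real.exp (-(c*z.1)) - Real.exp (-((c+z.2)*z.1)))]
    rw [abs_of_nonneg (Real.exp_pos _).le]
    have := Real.exp_pos (-((c+z.2)*z.1))
    rw [neg_mul]
    linarith
  rw [hswap]
  -- inner u-integral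
  have hval : ∀ r ∈ Ioc (0:ℝ) t,
      ∫ u in Ioi (0:ℝ), (Real.exp (-(c*u)) - Real.exp (-((c+r)*u))) = 1/c - 1/(c+r) := by
    intro r hr
    have hcr : 0 < c + r := by linarith [hr.1]
    have i1 : IntegrableOn (fun u => Real.exp (-(c*u))) (Ioi (0:ℝ)) := by
      simpa [neg_mul] using exp_neg_integrableOn_Ioi 0 hc
    have i2 : IntegrableOn (fun u => Real.exp (-((c+r)*u))) (Ioi (0:ℝ)) := by
      have h := exp_neg_integrableOn_Ioi 0 hcr
      have e : ∀ u:ℝ, -(c+r) * u = -((c+r)*u) := fun u => by ring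
      simpa only [e] using h
    rw [MeasureTheory.integral_sub i1 i2, exp_int c hc, exp_int (c+r) hcr]
  rw [setIntegral_congr_fun measurableSet_Ioc hval]
  -- final r-integral
  rw [← intervalIntegral.integral_of_le ht.le]
  have hcont : IntervalIntegrable (fun r => 1/(c+r)) volume 0 t := by
    apply ContinuousOn.intervalIntegrable
    apply ContinuousOn.div continuousOn_const (by fun_prop)
    intro r hr
    rw [Set.uIcc_of_le ht.le] at hr
    have := hr.1; positivity
  rw [intervalIntegral.integral_sub intervalIntegrable_const hcont,
    intervalIntegral.integral_const]
  have h4 : ∫ r in (0:ℝ)..t, 1/(c+r) = Real.log (1 + t/c) := by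
    rw [intervalIntegral.integral_comp_add_left (fun x => 1/x) c]
    rw [integral_one_div]
    · rw [add_zero]
      congr 1
      field_simp
    · rw [add_zero]
      intro h
      rw [Set.uIcc_of_le (by linarith : c ≤ c + t)] at h
      have := h.1; linarith
  rw [h4]
  simp only [smul_eq_mul, sub_zero]
  ring_nf

lemma malmsten_aux (c t : ℝ) (hc : 0 < c) (ht : 0 < t) :
    IntegrableOn (fun u => (Real.exp (-(t*u)) - 1 + t*u) *
      (Real.exp (-(c*u)) / (u * (1 - Real.exp (-(c*u)))))) (Ioi (0:ℝ)) ∧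
    ∫ u in Ioi (0:ℝ), (Real.exp (-(t*u)) - 1 + t*u) *
      (Real.exp (-(c*u)) / (u * (1 - Real.exp (-(c*u)))))
      = Real.log (Real.Gamma (1 + t/c)) + Real.eulerMascheroniConstant * (t/c) := by
  set F : ℝ → ℝ := fun u => (Real.exp (-(t*u)) - 1 + t*u) *
      (Real.exp (-(c*u)) / (u * (1 - Real.exp (-(c*u))))) with hF
  set f : ℕ → ℝ → ℝ := fun n u => (Real.exp (-(t*u)) - 1 + t*u) *
      Real.exp (-((c*(n+1))*u)) / u with hfdef
  set a : ℕ → ℝ := fun n => t/c/(n+1) - Real.log (1 + t/c/(n+1)) with ha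
  have htc : 0 < t/c := by positivity
  have hA : HasSum a (Real.log (Real.Gamma (1 + t/c))
      + Real.eulerMascheroniConstant * (t/c)) := gammaSeriesHasSum (t/c) htc
  have hanonneg : ∀ n, 0 ≤ a n := by
    intro n
    have h1 : (0:ℝ) < 1 + t/c/(n+1) := by positivity
    have := Real.log_le_sub_one_of_pos h1
    simp only [ha]
    linarith
  have hfi : ∀ n : ℕ, IntegrableOn (f n) (Ioi (0:ℝ)) := fun n =>
    frullani_integrable (c*(n+1)) t (by positivity) ht
  have hfval : ∀ n : ℕ, ∫ u in Ioi (0:ℝ), f n u = a n := by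
    intro n
    rw [hfdef]
    rw [frullani (c*(n+1)) t (by positivity) ht]
    simp only [ha, div_div]
  have hfnonneg : ∀ n : ℕ, ∀ u ∈ Ioi (0:ℝ), 0 ≤ f n u := by
    intro n u hu
    have hu0 : (0:ℝ) < u := hu
    have h1 : 0 ≤ Real.exp (-(t*u)) - 1 + t*u := by
      have := Real.add_one_le_exp (-(t*u)); linarith
    have h2 : (0:ℝ) < Real.exp (-((c*(n+1))*u)) := Real.exp_pos _
    simp only [hfdef]
    positivity
  have hfmeas : ∀ n : ℕ, AEStronglyMeasurable (f n) (volume.restrict (Ioi (0:ℝ))) := by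
    intro n
    apply Measurable.aestronglyMeasurable
    fun_prop
  have hFmeas : AEStronglyMeasurable F (volume.restrict (Ioi (0:ℝ))) := by
    apply Measurable.aestronglyMeasurable
    fun_prop
  -- pointwise sum
  have hsum : ∀ u ∈ Ioi (0:ℝ), HasSum (fun n => f n u) (F u) := by
    intro u hu
    have hu0 : (0:ℝ) < u := hu
    set r : ℝ := Real.exp (-(c*u)) with hr
    have hr0 : 0 ≤ r := (Real.exp_pos _).le
    have hr1 : r < 1 := by
      rw [hr, Real.exp_lt_one_iff]
      nlinarith
    have geo : HasSum (fun n : ℕ => r ^ n) (1 - r)⁻¹ := hasSum_geometric_of_lt_one hr0 hr1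
    have geo2 := ((geo.mul_left r).mul_left (Real.exp (-(t*u)) - 1 + t*u)).div_const u
    have heq : ∀ n : ℕ, (Real.exp (-(t*u)) - 1 + t*u) * (r * r ^ n) / u = f n u := by
      intro n
      simp only [hfdef]
      congr 2
      rw [hr, ← Real.exp_nat_mul, ← Real.exp_add]
      congr 1
      push_cast
      ring
    have hval : (Real.exp (-(t*u)) - 1 + t*u) * (r * (1-r)⁻¹) / u = F u := by
      simp only [hF, ← hr]
      simp only [div_eq_mul_inv, mul_inv]
      ring
    rw [← hval]
    simpa only [heq] using geo2
  -- lintegral computation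
  have hstep3 : ∀ n : ℕ, ∫⁻ u in Ioi (0:ℝ), ENNReal.ofReal (f n u) = ENNReal.ofReal (a n) := by
    intro n
    rw [← MeasureTheory.ofReal_integral_eq_lintegral_ofReal (hfi n)]
    · rw [hfval n]
    · rw [Filter.EventuallyLE, ae_restrict_iff' measurableSet_Ioi]
      filter_upwards with u hu
      exact hfnonneg n u hu
  have hsum_ofReal : ∑' n : ℕ, ENNReal.ofReal (a n) = ENNReal.ofReal (∑' n, a n) :=
    (ENNReal.ofReal_tsum_of_nonneg hanonneg hA.summable).symm
  have hlin : ∫⁻ u in Ioi (0:ℝ), ‖F u‖ₑ = ENNReal.ofReal (∑' n, a n) := by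
    have hcongr : ∀ᵐ u ∂(volume.restrict (Ioi (0:ℝ))),
        ‖F u‖ₑ = ∑' n : ℕ, ENNReal.ofReal (f n u) := by
      rw [ae_restrict_iff' measurableSet_Ioi]
      filter_upwards with u hu
      have hFu : 0 ≤ F u := (hsum u hu).nonneg (fun n => hfnonneg n u hu)
      rw [Real.enorm_eq_ofReal hFu, ← (hsum u hu).tsum_eq,
        ENNReal.ofReal_tsum_of_nonneg (fun n => hfnonneg n u hu) (hsum u hu).summable]
    have hm : ∀ n : ℕ, Measurable (f n) := fun n => by fun_prop
    rw [lintegral_congr_ae hcongr,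
      lintegral_tsum (fun n => ((hm n).ennreal_ofReal).aemeasurable)]
    rw [tsum_congr hstep3]
    exact hsum_ofReal
  have hFint : IntegrableOn F (Ioi (0:ℝ)) := by
    refine ⟨hFmeas, ?_⟩
    rw [hasFiniteIntegral_def, hlin]
    exact ENNReal.ofReal_lt_top
  refine ⟨hFint, ?_⟩
  have hFeq : ∀ u ∈ Ioi (0:ℝ), F u = ∑' n : ℕ, f n u := fun u hu => ((hsum u hu).tsum_eq).symm
  calc ∫ u in Ioi (0:ℝ), F u = ∫ u in Ioi (0:ℝ), ∑' n : ℕ, f n u :=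
        setIntegral_congr_fun measurableSet_Ioi hFeq
    _ = ∑' n : ℕ, ∫ u in Ioi (0:ℝ), f n u := by
        refine MeasureTheory.integral_tsum hfmeas ?_
        have : ∀ n : ℕ, ∫⁻ u in Ioi (0:ℝ), ‖f n u‖ₑ = ENNReal.ofReal (a n) := by
          intro n
          rw [← hstep3 n]
          refine lintegral_congr_ae ?_
          filter_upwards [ae_restrict_mem measurableSet_Ioi] with u hu
          rw [Real.enorm_eq_ofReal (hfnonneg n u hu)]
        rw [tsum_congr this, hsum_ofReal]
        exact ENNReal.ofReal_ne_top
    _ = ∑' n : ℕ, a n := tsum_congr hfval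
    _ = _ := hA.tsum_eq

/-- Malmsten-type representation of the Mellin transform of `Z_α⁻¹`:
for `α ∈ (0,1)` and `s > 0`,
`Γ(1+s/α)/Γ(1+s) = exp(γ(1-1/α)s + ∫_{-∞}^0 (e^{sx}-1-sx)
  e^{-α|x|}(1-e^{-(1-α)|x|})/(|x|(1-e^{-|x|})(1-e^{-α|x|})) dx)`. -/
theorem stable_mellin_malmsten (α : ℝ) (hα : α ∈ Ioo (0 : ℝ) 1) (s : ℝ) (hs : 0 < s) :
    Real.Gamma (1 + s / α) / Real.Gamma (1 + s) =
      Real.exp (Real.eulerMascheroniConstant * (1 - 1 / α) * s +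
        ∫ x in Iio (0 : ℝ),
          (Real.exp (s * x) - 1 - s * x) *
            (Real.exp (-(α * |x|)) * (1 - Real.exp (-((1 - α) * |x|))) /
              (|x| * (1 - Real.exp (-|x|)) * (1 - Real.exp (-(α * |x|)))))) := by
  obtain ⟨hα0, hα1⟩ := hα
  set Φ : ℝ → ℝ := fun x => (Real.exp (s * x) - 1 - s * x) *
      (Real.exp (-(α * |x|)) * (1 - Real.exp (-((1 - α) * |x|))) /
        (|x| * (1 - Real.exp (-|x|)) * (1 - Real.exp (-(α * |x|))))) with hΦ
  have h1 := integral_comp_neg_Ioi (0:ℝ) Φ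
  rw [neg_zero, integral_Iic_eq_integral_Iio] at h1
  set Gα : ℝ → ℝ := fun u => (Real.exp (-(s*u)) - 1 + s*u) *
      (Real.exp (-(α*u)) / (u * (1 - Real.exp (-(α*u))))) with hGα
  set G1 : ℝ → ℝ := fun u => (Real.exp (-(s*u)) - 1 + s*u) *
      (Real.exp (-u) / (u * (1 - Real.exp (-u)))) with hG1
  have hG1' : G1 = fun u => (Real.exp (-(s*u)) - 1 + s*u) *
      (Real.exp (-(1*u)) / (u * (1 - Real.exp (-(1*u))))) := by
    funext u; simp only [hG1, one_mul]
  have hmau := malmsten_aux α s hα0 hs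
  have hm1u := malmsten_aux 1 s one_pos hs
  rw [← hG1'] at hm1u
  have hpt : ∀ u ∈ Ioi (0:ℝ), Φ (-u) = Gα u - G1 u := by
    intro u hu
    have hu0 : (0:ℝ) < u := hu
    have habs : |(-u)| = u := by rw [abs_neg, abs_of_pos hu0]
    simp only [hΦ, hGα, hG1, habs]
    have hA : Real.exp (s * (-u)) - 1 - s * (-u) = Real.exp (-(s*u)) - 1 + s*u := by
      rw [show s * (-u) = -(s*u) by ring]; ring
    rw [hA]
    have hab : Real.exp (-u) = Real.exp (-(α*u)) * Real.exp (-((1-α)*u)) := by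
      rw [← Real.exp_add]; congr 1; ring
    rw [hab]
    set a := Real.exp (-(α*u)) with hadef
    set e := Real.exp (-((1-α)*u)) with hedef
    have ha1 : a < 1 := by rw [hadef, Real.exp_lt_one_iff]; nlinarith
    have he1 : a * e < 1 := by
      rw [hadef, hedef, ← Real.exp_add, Real.exp_lt_one_iff]; nlinarith
    have ha0 : 0 < a := Real.exp_pos _
    have he0 : 0 < e := Real.exp_pos _
    have h2 : 1 - a ≠ 0 := by linarith
    have h3 : 1 - a * e ≠ 0 := by linarith
    have h4 : u ≠ 0 := ne_of_gt hu0
    field_simp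
    ring
  have h2 : ∫ x in Iio (0:ℝ), Φ x = ∫ u in Ioi (0:ℝ), (Gα u - G1 u) := by
    rw [← h1]
    exact setIntegral_congr_fun measurableSet_Ioi hpt
  rw [h2, MeasureTheory.integral_sub hmau.1 hm1u.1, hmau.2, hm1u.2]
  have hx : (0:ℝ) < 1 + s/α := by positivity
  have hy : (0:ℝ) < 1 + s := by positivity
  have hexp : Real.eulerMascheroniConstant * (1 - 1 / α) * s +
      (Real.log (Real.Gamma (1 + s/α)) + Real.eulerMascheroniConstant * (s/α) -
        (Real.log (Real.Gamma (1 + s/1)) + Real.eulerMascheroniConstant * (s/1)))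
      = Real.log (Real.Gamma (1 + s/α)) - Real.log (Real.Gamma (1 + s)) := by
    simp only [div_one]
    ring
  rw [hexp, Real.exp_sub, Real.exp_log (Real.Gamma_pos_of_pos hx),
    Real.exp_log (Real.Gamma_pos_of_pos hy)]
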